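/- Soundness of the restricted intuitionistic sequent calculus: if a sequent Θ; Γ ⊢ ψ is derivable, then for every assignment of the free variables to objects of appropriate nested relational types satisfying all membership atoms in Θ and all Δ0 formulas in Γ, the conclusion ψ holds (under the standard semantics where t ⊆_T u means set containment, t =_T u means equality, and t ∈_T u means membership). -/

import Mathlib

/-- Nested relational types. -/
inductive NType : Type
  | U : NType
  | unit : NType
  | prod : NType → NType → NType
  | set : NType → NType

/-- Objects of a nested relational type over a set `α` of Ur-elements. -/
def Obj (α : Type) : NType → Type
  | .U => α
  | .unit => Unit
  | .prod a b => Obj α a × Obj α b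
  | .set t => Set (Obj α t)

/-- Typed de Bruijn variables over a context of types. -/
inductive Var : List NType → NType → Type
  | zero {Γ t} : Var (t :: Γ) t
  | succ {Γ s t} : Var Γ t → Var (s :: Γ) t

/-- Environments: assignments of objects to all variables of a context. -/
def Env (α : Type) (Γ : List NType) : Type := ∀ t, Var Γ t → Obj α t

def Env.nil {α : Type} : Env α [] := fun _ v => nomatch v

def Env.cons {α : Type} {Γ : List NType} {t : NType} (x : Obj α t) (ρ : Env α Γ) :
    Env α (t :: Γ) := fun s v =>
  match v with
  | .zero => x
  | .succ w => ρ s w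

/-- Terms: variables, unit, tupling and projections. -/
inductive Tm : List NType → NType → Type
  | var {Γ t} : Var Γ t → Tm Γ t
  | unit {Γ} : Tm Γ .unit
  | pair {Γ a b} : Tm Γ a → Tm Γ b → Tm Γ (.prod a b)
  | fst {Γ a b} : Tm Γ (.prod a b) → Tm Γ a
  | snd {Γ a b} : Tm Γ (.prod a b) → Tm Γ b

def Tm.eval {α : Type} {Γ : List NType} (ρ : Env α Γ) : ∀ {t}, Tm Γ t → Obj α t
  | _, .var v => ρ _ v
  | _, .unit => (() : Unit)
  | _, .pair a b => ((Tm.eval ρ a, Tm.eval ρ b) : _ × _)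
  | _, .fst (a := a) (b := b) p => (Tm.eval ρ p : Obj α a × Obj α b).1
  | _, .snd (a := a) (b := b) p => (Tm.eval ρ p : Obj α a × Obj α b).2

/-- Δ₀ formulas: (dis)equality of Ur-elements, ⊤, ⊥, ∧, ∨ and bounded quantifiers. -/
inductive Delta0 : List NType → Type
  | eqU {Γ} : Tm Γ .U → Tm Γ .U → Delta0 Γ
  | neU {Γ} : Tm Γ .U → Tm Γ .U → Delta0 Γ
  | tru {Γ} : Delta0 Γ
  | fls {Γ} : Delta0 Γ
  | and {Γ} : Delta0 Γ → Delta0 Γ → Delta0 Γ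
  | or {Γ} : Delta0 Γ → Delta0 Γ → Delta0 Γ
  | all {Γ t} : Tm Γ (.set t) → Delta0 (t :: Γ) → Delta0 Γ
  | ex {Γ t} : Tm Γ (.set t) → Delta0 (t :: Γ) → Delta0 Γ

/-- Satisfaction of a Δ₀ formula in an environment. -/
def Delta0.sat {α : Type} : ∀ {Γ}, Env α Γ → Delta0 Γ → Prop
  | _, ρ, .eqU a b => Tm.eval ρ a = Tm.eval ρ b
  | _, ρ, .neU a b => Tm.eval ρ a ≠ Tm.eval ρ b
  | _, _, .tru => True
  | _, _, .fls => False
  | _, ρ, .and φ ψ => Delta0.sat ρ φ ∧ Delta0.sat ρ ψ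
  | _, ρ, .or φ ψ => Delta0.sat ρ φ ∨ Delta0.sat ρ ψ
  | _, ρ, .all (t := T) s φ =>
      ∀ x : Obj _ T, x ∈ (show Set (Obj _ T) from Tm.eval ρ s) → Delta0.sat (Env.cons x ρ) φ
  | _, ρ, .ex (t := T) s φ =>
      ∃ x : Obj _ T, x ∈ (show Set (Obj _ T) from Tm.eval ρ s) ∧ Delta0.sat (Env.cons x ρ) φ

/-- Nested relational calculus expressions. -/
inductive NRC : List NType → NType → Type
  | var {Γ t} : Var Γ t → NRC Γ t
  | unit {Γ} : NRC Γ .unit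
  | pair {Γ a b} : NRC Γ a → NRC Γ b → NRC Γ (.prod a b)
  | fst {Γ a b} : NRC Γ (.prod a b) → NRC Γ a
  | snd {Γ a b} : NRC Γ (.prod a b) → NRC Γ b
  | sing {Γ t} : NRC Γ t → NRC Γ (.set t)
  | empty {Γ t} : NRC Γ (.set t)
  | union {Γ t} : NRC Γ (.set t) → NRC Γ (.set t) → NRC Γ (.set t)
  | diff {Γ t} : NRC Γ (.set t) → NRC Γ (.set t) → NRC Γ (.set t)
  | bigUnion {Γ a b} : NRC (a :: Γ) (.set b) → NRC Γ (.set a) → NRC Γ (.set b)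

/-- Semantics of NRC expressions. -/
def NRC.eval {α : Type} : ∀ {Γ}, Env α Γ → ∀ {t}, NRC Γ t → Obj α t
  | _, ρ, _, .var v => ρ _ v
  | _, _, _, .unit => (() : Unit)
  | _, ρ, _, .pair a b => ((NRC.eval ρ a, NRC.eval ρ b) : _ × _)
  | _, ρ, _, .fst (a := a) (b := b) p => (NRC.eval ρ p : Obj α a × Obj α b).1
  | _, ρ, _, .snd (a := a) (b := b) p => (NRC.eval ρ p : Obj α a × Obj α b).2
  | _, ρ, _, .sing e => ({NRC.eval ρ e} : Set _)
  | _, _, _, .empty => (∅ : Set _)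
  | _, ρ, _, .union e1 e2 => ((NRC.eval ρ e1 : Set _) ∪ (NRC.eval ρ e2 : Set _) : Set _)
  | _, ρ, _, .diff e1 e2 => ((NRC.eval ρ e1 : Set _) \ (NRC.eval ρ e2 : Set _) : Set _)
  | _, ρ, _, .bigUnion (a := a) (b := b) e2 e1 =>
      show Set (Obj α b) from
        ⋃ x ∈ (show Set (Obj α a) from NRC.eval ρ e1),
          (show Set (Obj α b) from NRC.eval (Env.cons x ρ) e2)

/-- The Boolean type `Set(Unit)`. -/
abbrev NType.bool : NType := .set .unit

/-! ### Renamings and substitutions -/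

/-- Renamings between contexts. -/
def Ren (Γ Δ : List NType) : Type := ∀ t, Var Γ t → Var Δ t

/-- Weakening renaming. -/
def Ren.wk {Γ : List NType} {s : NType} : Ren Γ (s :: Γ) := fun _ v => .succ v

def Ren.lift {Γ Δ : List NType} {s : NType} (r : Ren Γ Δ) : Ren (s :: Γ) (s :: Δ) :=
  fun t v =>
    match v with
    | .zero => .zero
    | .succ w => .succ (r t w)

def Tm.rename {Γ Δ : List NType} (r : Ren Γ Δ) : ∀ {t}, Tm Γ t → Tm Δ t
  | _, .var v => .var (r _ v)
  | _, .unit => .unit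
  | _, .pair a b => .pair (a.rename r) (b.rename r)
  | _, .fst p => .fst (p.rename r)
  | _, .snd p => .snd (p.rename r)

def Delta0.rename : ∀ {Γ Δ}, Ren Γ Δ → Delta0 Γ → Delta0 Δ
  | _, _, r, .eqU a b => .eqU (a.rename r) (b.rename r)
  | _, _, r, .neU a b => .neU (a.rename r) (b.rename r)
  | _, _, _, .tru => .tru
  | _, _, _, .fls => .fls
  | _, _, r, .and φ ψ => .and (φ.rename r) (ψ.rename r)
  | _, _, r, .or φ ψ => .or (φ.rename r) (ψ.rename r)
  | _, _, r, .all s φ => .all (s.rename r) (φ.rename r.lift)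
  | _, _, r, .ex s φ => .ex (s.rename r) (φ.rename r.lift)

/-- Substitutions mapping variables of `Γ` to terms over `Δ`. -/
def Subst (Γ Δ : List NType) : Type := ∀ t, Var Γ t → Tm Δ t

def Subst.id {Γ : List NType} : Subst Γ Γ := fun _ v => .var v

/-- Substituting a term for the topmost variable. -/
def Subst.cons {Γ Δ : List NType} {s : NType} (u : Tm Δ s) (σ : Subst Γ Δ) : Subst (s :: Γ) Δ :=
  fun t v =>
    match v with
    | .zero => u
    | .succ w => σ t w

def Subst.lift {Γ Δ : List NType} {s : NType} (σ : Subst Γ Δ) : Subst (s :: Γ) (s :: Δ) :=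
  fun t v =>
    match v with
    | .zero => .var .zero
    | .succ w => (σ t w).rename Ren.wk

def Tm.subst {Γ Δ : List NType} (σ : Subst Γ Δ) : ∀ {t}, Tm Γ t → Tm Δ t
  | _, .var v => σ _ v
  | _, .unit => .unit
  | _, .pair a b => .pair (a.subst σ) (b.subst σ)
  | _, .fst p => .fst (p.subst σ)
  | _, .snd p => .snd (p.subst σ)

def Delta0.subst : ∀ {Γ Δ}, Subst Γ Δ → Delta0 Γ → Delta0 Δ
  | _, _, σ, .eqU a b => .eqU (a.subst σ) (b.subst σ)
  | _, _, σ, .neU a b => .neU (a.subst σ) (b.subst σ)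
  | _, _, _, .tru => .tru
  | _, _, _, .fls => .fls
  | _, _, σ, .and φ ψ => .and (φ.subst σ) (ψ.subst σ)
  | _, _, σ, .or φ ψ => .or (φ.subst σ) (ψ.subst σ)
  | _, _, σ, .all s φ => .all (s.subst σ) (φ.subst σ.lift)
  | _, _, σ, .ex s φ => .ex (s.subst σ) (φ.subst σ.lift)

/-! ### Sequents: membership contexts and right-hand sides -/

/-- A membership atom `t ∈_T u`. -/
abbrev MemAtom (Γ : List NType) : Type := (t : NType) × (Tm Γ t × Tm Γ (.set t))

/-- A membership context is a (multi)set of membership atoms. -/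
abbrev MemCtx (Γ : List NType) : Type := List (MemAtom Γ)

def MemAtom.subst {Γ Δ : List NType} (σ : Subst Γ Δ) (a : MemAtom Γ) : MemAtom Δ :=
  ⟨a.1, (a.2.1.subst σ, a.2.2.subst σ)⟩

def MemCtx.subst {Γ Δ : List NType} (σ : Subst Γ Δ) (Θ : MemCtx Γ) : MemCtx Δ :=
  Θ.map (MemAtom.subst σ)

def MemAtom.rename {Γ Δ : List NType} (r : Ren Γ Δ) (a : MemAtom Γ) : MemAtom Δ :=
  ⟨a.1, (a.2.1.rename r, a.2.2.rename r)⟩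

def MemCtx.rename {Γ Δ : List NType} (r : Ren Γ Δ) (Θ : MemCtx Γ) : MemCtx Δ :=
  Θ.map (MemAtom.rename r)

/-- Right-hand side formulas of sequents: `t ∈_T u`, `t =_T u`, or `t ⊆_T u`. -/
inductive RHS (Γ : List NType) : Type
  | mem {t : NType} : Tm Γ t → Tm Γ (.set t) → RHS Γ
  | eq {t : NType} : Tm Γ t → Tm Γ t → RHS Γ
  | sub {t : NType} : Tm Γ (.set t) → Tm Γ (.set t) → RHS Γ

def RHS.subst {Γ Δ : List NType} (σ : Subst Γ Δ) : RHS Γ → RHS Δ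
  | .mem t u => .mem (t.subst σ) (u.subst σ)
  | .eq t u => .eq (t.subst σ) (u.subst σ)
  | .sub t u => .sub (t.subst σ) (u.subst σ)

def RHS.rename {Γ Δ : List NType} (r : Ren Γ Δ) : RHS Γ → RHS Δ
  | .mem t u => .mem (t.rename r) (u.rename r)
  | .eq t u => .eq (t.rename r) (u.rename r)
  | .sub t u => .sub (t.rename r) (u.rename r)

/-- The substitution replacing a product-typed variable by a pair of fresh variables. -/
def etaSub {Γ : List NType} {a b : NType} : Subst (.prod a b :: Γ) (a :: b :: Γ) :=
  Subst.cons (.pair (.var .zero) (.var (.succ .zero)))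
    (fun _ v => .var (.succ (.succ v)))

/-! ### The restricted intuitionistic sequent calculus (Figure 2) -/

inductive SeqD : ∀ Γ : List NType, MemCtx Γ → List (Delta0 Γ) → RHS Γ → Prop
  /-- exchange: contexts are multisets -/
  | perm {Γ : List NType} {Θ Θ' : MemCtx Γ} {G G' : List (Delta0 Γ)} {ψ : RHS Γ} :
      Θ.Perm Θ' → G.Perm G' → SeqD Γ Θ G ψ → SeqD Γ Θ' G' ψ
  /-- Contraction -/
  | contraction {Γ : List NType} {Θ : MemCtx Γ} {G : List (Delta0 Γ)} {φ : Delta0 Γ}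
      {ψ : RHS Γ} : SeqD Γ Θ (φ :: φ :: G) ψ → SeqD Γ Θ (φ :: G) ψ
  /-- ∈_U-R -/
  | memU_R {Γ : List NType} {Θ : MemCtx Γ} {G : List (Delta0 Γ)} {t : Tm Γ .U}
      {u : Tm Γ (.set .U)} : SeqD Γ (⟨.U, (t, u)⟩ :: Θ) G (.mem t u)
  /-- =_Set-R -/
  | eqSet_R {Γ : List NType} {Θ : MemCtx Γ} {G : List (Delta0 Γ)} {T : NType}
      {t u : Tm Γ (.set T)} :
      SeqD Γ Θ G (.sub t u) → SeqD Γ Θ G (.sub u t) → SeqD Γ Θ G (.eq t u)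
  /-- =_×-R -/
  | eqProd_R {Γ : List NType} {Θ : MemCtx Γ} {G : List (Delta0 Γ)} {a b : NType}
      {t u : Tm Γ (.prod a b)} :
      SeqD Γ Θ G (.eq (.fst t) (.fst u)) → SeqD Γ Θ G (.eq (.snd t) (.snd u)) →
      SeqD Γ Θ G (.eq t u)
  /-- =_Unit-R -/
  | eqUnit_R {Γ : List NType} {Θ : MemCtx Γ} {G : List (Delta0 Γ)} {t u : Tm Γ .unit} :
      SeqD Γ Θ G (.eq t u)
  /-- =_U-R (via a fresh set variable z) -/
  | eqU_R {Γ : List NType} {Θ : MemCtx Γ} {G : List (Delta0 Γ)} {t u : Tm Γ .U} :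
      SeqD (.set .U :: Γ)
        (⟨.U, (t.rename Ren.wk, .var .zero)⟩ :: MemCtx.rename Ren.wk Θ)
        (G.map (Delta0.rename Ren.wk)) (.mem (u.rename Ren.wk) (.var .zero)) →
      SeqD Γ Θ G (.eq t u)
  /-- ⊆-R (fresh variable z) -/
  | sub_R {Γ : List NType} {Θ : MemCtx Γ} {G : List (Delta0 Γ)} {T : NType}
      {t u : Tm Γ (.set T)} :
      SeqD (T :: Γ)
        (⟨T, (.var .zero, t.rename Ren.wk)⟩ :: MemCtx.rename Ren.wk Θ)
        (G.map (Delta0.rename Ren.wk)) (.mem (.var .zero) (u.rename Ren.wk)) →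
      SeqD Γ Θ G (.sub t u)
  /-- ∈_Set-R -/
  | memSet_R {Γ : List NType} {Θ : MemCtx Γ} {G : List (Delta0 Γ)} {T : NType}
      {t u : Tm Γ (.set T)} {v : Tm Γ (.set (.set T))} :
      SeqD Γ (⟨.set T, (t, v)⟩ :: Θ) G (.eq t u) →
      SeqD Γ (⟨.set T, (t, v)⟩ :: Θ) G (.mem u v)
  /-- ⊥-L -/
  | bot_L {Γ : List NType} {Θ : MemCtx Γ} {G : List (Delta0 Γ)} {T : NType} {t : Tm Γ T}
      {u : Tm Γ (.set T)} : SeqD Γ Θ (.fls :: G) (.mem t u)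
  /-- ∧-L -/
  | and_L {Γ : List NType} {Θ : MemCtx Γ} {G : List (Delta0 Γ)} {φ1 φ2 : Delta0 Γ}
      {T : NType} {t : Tm Γ T} {u : Tm Γ (.set T)} :
      SeqD Γ Θ (φ1 :: φ2 :: G) (.mem t u) → SeqD Γ Θ (.and φ1 φ2 :: G) (.mem t u)
  /-- ∨-L -/
  | or_L {Γ : List NType} {Θ : MemCtx Γ} {G : List (Delta0 Γ)} {φ1 φ2 : Delta0 Γ}
      {T : NType} {t : Tm Γ T} {u : Tm Γ (.set T)} :
      SeqD Γ Θ (φ1 :: G) (.mem t u) → SeqD Γ Θ (φ2 :: G) (.mem t u) →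
      SeqD Γ Θ (.or φ1 φ2 :: G) (.mem t u)
  /-- ∀-L (bounded, instantiating at a term w with w ∈ z in Θ) -/
  | all_L {Γ : List NType} {Θ : MemCtx Γ} {G : List (Delta0 Γ)} {T T' : NType}
      {w : Tm Γ T} {z : Tm Γ (.set T)} {φ : Delta0 (T :: Γ)} {v : Tm Γ T'}
      {vv : Tm Γ (.set T')} :
      SeqD Γ (⟨T, (w, z)⟩ :: Θ) (φ.subst (Subst.cons w Subst.id) :: G) (.mem v vv) →
      SeqD Γ (⟨T, (w, z)⟩ :: Θ) (.all z φ :: G) (.mem v vv)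
  /-- ∃-L (bounded, fresh variable) -/
  | ex_L {Γ : List NType} {Θ : MemCtx Γ} {G : List (Delta0 Γ)} {T T' : NType}
      {y : Tm Γ (.set T)} {φ : Delta0 (T :: Γ)} {v : Tm Γ T'} {vv : Tm Γ (.set T')} :
      SeqD (T :: Γ)
        (⟨T, (.var .zero, y.rename Ren.wk)⟩ :: MemCtx.rename Ren.wk Θ)
        (φ :: G.map (Delta0.rename Ren.wk))
        (.mem (v.rename Ren.wk) (vv.rename Ren.wk)) →
      SeqD Γ Θ (.ex y φ :: G) (.mem v vv)
  /-- =-subst -/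
  | eq_subst {Γ : List NType} {Θ : MemCtx (.U :: Γ)} {G : List (Delta0 (.U :: Γ))}
      {y : Tm Γ .U} {T' : NType} {v : Tm (.U :: Γ) T'} {vv : Tm (.U :: Γ) (.set T')} :
      SeqD Γ (MemCtx.subst (Subst.cons y Subst.id) Θ)
        (G.map (Delta0.subst (Subst.cons y Subst.id)))
        (RHS.subst (Subst.cons y Subst.id) (.mem v vv)) →
      SeqD (.U :: Γ) Θ (.eqU (.var .zero) (y.rename Ren.wk) :: G) (.mem v vv)
  /-- ≠-L -/
  | ne_L {Γ : List NType} {Θ : MemCtx Γ} {G : List (Delta0 Γ)} {t : Tm Γ .U}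
      {T' : NType} {v : Tm Γ T'} {vv : Tm Γ (.set T')} :
      SeqD Γ Θ (.neU t t :: G) (.mem v vv)
  /-- ×_β (first projection) -/
  | prod_beta1 {Γ : List NType} {a b : NType} {Θ : MemCtx (a :: Γ)}
      {G : List (Delta0 (a :: Γ))} {t1 : Tm Γ a} {t2 : Tm Γ b} {T' : NType}
      {v : Tm (a :: Γ) T'} {vv : Tm (a :: Γ) (.set T')} :
      SeqD Γ (MemCtx.subst (Subst.cons t1 Subst.id) Θ)
        (G.map (Delta0.subst (Subst.cons t1 Subst.id)))
        (RHS.subst (Subst.cons t1 Subst.id) (.mem v vv)) →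
      SeqD Γ (MemCtx.subst (Subst.cons (.fst (.pair t1 t2)) Subst.id) Θ)
        (G.map (Delta0.subst (Subst.cons (.fst (.pair t1 t2)) Subst.id)))
        (RHS.subst (Subst.cons (.fst (.pair t1 t2)) Subst.id) (.mem v vv))
  /-- ×_β (second projection) -/
  | prod_beta2 {Γ : List NType} {a b : NType} {Θ : MemCtx (b :: Γ)}
      {G : List (Delta0 (b :: Γ))} {t1 : Tm Γ a} {t2 : Tm Γ b} {T' : NType}
      {v : Tm (b :: Γ) T'} {vv : Tm (b :: Γ) (.set T')} :
      SeqD Γ (MemCtx.subst (Subst.cons t2 Subst.id) Θ)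
        (G.map (Delta0.subst (Subst.cons t2 Subst.id)))
        (RHS.subst (Subst.cons t2 Subst.id) (.mem v vv)) →
      SeqD Γ (MemCtx.subst (Subst.cons (.snd (.pair t1 t2)) Subst.id) Θ)
        (G.map (Delta0.subst (Subst.cons (.snd (.pair t1 t2)) Subst.id)))
        (RHS.subst (Subst.cons (.snd (.pair t1 t2)) Subst.id) (.mem v vv))
  /-- ×_η -/
  | prod_eta {Γ : List NType} {a b : NType} {Θ : MemCtx (.prod a b :: Γ)}
      {G : List (Delta0 (.prod a b :: Γ))} {T' : NType} {v : Tm (.prod a b :: Γ) T'}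
      {vv : Tm (.prod a b :: Γ) (.set T')} :
      SeqD (a :: b :: Γ) (MemCtx.subst etaSub Θ) (G.map (Delta0.subst etaSub))
        (RHS.subst etaSub (.mem v vv)) →
      SeqD (.prod a b :: Γ) Θ G (.mem v vv)

/-! ### Semantics of sequents -/

def MemAtom.sat {α : Type} {Γ : List NType} (ρ : Env α Γ) (a : MemAtom Γ) : Prop :=
  Tm.eval ρ a.2.1 ∈ (show Set (Obj α a.1) from Tm.eval ρ a.2.2)

def MemCtx.sat {α : Type} {Γ : List NType} (ρ : Env α Γ) (Θ : MemCtx Γ) : Prop :=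
  ∀ a ∈ Θ, MemAtom.sat ρ a

def CtxSat {α : Type} {Γ : List NType} (ρ : Env α Γ) (G : List (Delta0 Γ)) : Prop :=
  ∀ φ ∈ G, Delta0.sat ρ φ

def RHS.sat {α : Type} {Γ : List NType} (ρ : Env α Γ) : RHS Γ → Prop
  | .mem (t := T) t u => Tm.eval ρ t ∈ (show Set (Obj α T) from Tm.eval ρ u)
  | .eq t u => Tm.eval ρ t = Tm.eval ρ u
  | .sub (t := T) t u =>
      (show Set (Obj α T) from Tm.eval ρ t) ⊆ (show Set (Obj α T) from Tm.eval ρ u)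

/-! ### Free variables -/

def Tm.fv {Γ : List NType} : ∀ {t}, Tm Γ t → Set ((s : NType) × Var Γ s)
  | _, .var v => {⟨_, v⟩}
  | _, .unit => ∅
  | _, .pair a b => a.fv ∪ b.fv
  | _, .fst p => p.fv
  | _, .snd p => p.fv

/-- Remove the topmost (bound) variable from a set of variables. -/
def dropFv {Γ : List NType} {a : NType} (S : Set ((s : NType) × Var (a :: Γ) s)) :
    Set ((s : NType) × Var Γ s) :=
  {v | (⟨v.1, .succ v.2⟩ : (s : NType) × Var (a :: Γ) s) ∈ S}

def Delta0.fv : ∀ {Γ : List NType}, Delta0 Γ → Set ((s : NType) × Var Γ s)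
  | _, .eqU a b => a.fv ∪ b.fv
  | _, .neU a b => a.fv ∪ b.fv
  | _, .tru => ∅
  | _, .fls => ∅
  | _, .and φ ψ => φ.fv ∪ ψ.fv
  | _, .or φ ψ => φ.fv ∪ ψ.fv
  | _, .all s φ => s.fv ∪ dropFv φ.fv
  | _, .ex s φ => s.fv ∪ dropFv φ.fv

/-- Free variables of one side (a membership context together with a formula context). -/
def ctxFv {Γ : List NType} (Θ : MemCtx Γ) (G : List (Delta0 Γ)) :
    Set ((s : NType) × Var Γ s) :=
  {v | (∃ a ∈ Θ, v ∈ a.2.1.fv ∪ a.2.2.fv) ∨ (∃ φ ∈ G, v ∈ φ.fv)}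

/-! ### NRC[Get] -/

/-- NRC extended with the `Get` operation extracting the unique element of a singleton. -/
inductive NRCG : List NType → NType → Type
  | var {Γ t} : Var Γ t → NRCG Γ t
  | unit {Γ} : NRCG Γ .unit
  | pair {Γ a b} : NRCG Γ a → NRCG Γ b → NRCG Γ (.prod a b)
  | fst {Γ a b} : NRCG Γ (.prod a b) → NRCG Γ a
  | snd {Γ a b} : NRCG Γ (.prod a b) → NRCG Γ b
  | sing {Γ t} : NRCG Γ t → NRCG Γ (.set t)
  | empty {Γ t} : NRCG Γ (.set t)
  | union {Γ t} : NRCG Γ (.set t) → NRCG Γ (.set t) → NRCG Γ (.set t)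
  | diff {Γ t} : NRCG Γ (.set t) → NRCG Γ (.set t) → NRCG Γ (.set t)
  | bigUnion {Γ a b} : NRCG (a :: Γ) (.set b) → NRCG Γ (.set a) → NRCG Γ (.set b)
  | get {Γ t} : NRCG Γ (.set t) → NRCG Γ t

/-- Default objects of each type (built from the distinguished Ur-element). -/
def Obj.dflt (α : Type) [Inhabited α] : ∀ t, Obj α t
  | .U => (default : α)
  | .unit => (() : Unit)
  | .prod a b => ((Obj.dflt α a, Obj.dflt α b) : _ × _)
  | .set t => (∅ : Set (Obj α t))

attribute [local instance] Classical.propDecidable in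
/-- Semantics of NRC[Get]: `Get` extracts the unique element of a singleton and returns
the default object otherwise. -/
noncomputable def NRCG.eval {α : Type} [Inhabited α] :
    ∀ {Γ}, Env α Γ → ∀ {t}, NRCG Γ t → Obj α t
  | _, ρ, _, .var v => ρ _ v
  | _, _, _, .unit => (() : Unit)
  | _, ρ, _, .pair a b => ((NRCG.eval ρ a, NRCG.eval ρ b) : _ × _)
  | _, ρ, _, .fst (a := a) (b := b) p => (NRCG.eval ρ p : Obj α a × Obj α b).1
  | _, ρ, _, .snd (a := a) (b := b) p => (NRCG.eval ρ p : Obj α a × Obj α b).2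
  | _, ρ, _, .sing e => ({NRCG.eval ρ e} : Set _)
  | _, _, _, .empty => (∅ : Set _)
  | _, ρ, _, .union e1 e2 => ((NRCG.eval ρ e1 : Set _) ∪ (NRCG.eval ρ e2 : Set _) : Set _)
  | _, ρ, _, .diff e1 e2 => ((NRCG.eval ρ e1 : Set _) \ (NRCG.eval ρ e2 : Set _) : Set _)
  | _, ρ, _, .bigUnion (a := a) (b := b) e2 e1 =>
      show Set (Obj α b) from
        ⋃ x ∈ (show Set (Obj α a) from NRCG.eval ρ e1),
          (show Set (Obj α b) from NRCG.eval (Env.cons x ρ) e2)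
  | _, ρ, _, .get (t := t) e =>
      if h : ∃ x : Obj α t, (show Set (Obj α t) from NRCG.eval ρ e) = {x} then h.choose
      else Obj.dflt α t

def NRCG.fv : ∀ {Γ : List NType} {t}, NRCG Γ t → Set ((s : NType) × Var Γ s)
  | _, _, .var v => {⟨_, v⟩}
  | _, _, .unit => ∅
  | _, _, .pair a b => a.fv ∪ b.fv
  | _, _, .fst p => p.fv
  | _, _, .snd p => p.fv
  | _, _, .sing e => e.fv
  | _, _, .empty => ∅
  | _, _, .union e1 e2 => e1.fv ∪ e2.fv
  | _, _, .diff e1 e2 => e1.fv ∪ e2.fv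
  | _, _, .bigUnion e2 e1 => e1.fv ∪ dropFv e2.fv
  | _, _, .get e => e.fv

/-! ### Auxiliary lemmas for soundness -/

def envRen {α : Type} {Γ Δ : List NType} (r : Ren Γ Δ) (ρ : Env α Δ) : Env α Γ :=
  fun s v => ρ s (r s v)

def envSub {α : Type} {Γ Δ : List NType} (σ : Subst Γ Δ) (ρ : Env α Δ) : Env α Γ :=
  fun s v => Tm.eval ρ (σ s v)

theorem eval_rename {α : Type} {Γ Δ : List NType} (r : Ren Γ Δ) (ρ : Env α Δ) :
    ∀ {t} (tm : Tm Γ t), Tm.eval ρ (tm.rename r) = Tm.eval (envRen r ρ) tm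
  | _, .var v => rfl
  | _, .unit => rfl
  | _, .pair a b => by
      simp only [Tm.rename, Tm.eval, eval_rename r ρ a, eval_rename r ρ b]
      rfl
  | _, .fst p => by simp only [Tm.rename, Tm.eval, eval_rename r ρ p]
  | _, .snd p => by simp only [Tm.rename, Tm.eval, eval_rename r ρ p]

theorem envRen_lift {α : Type} {Γ Δ : List NType} {s : NType} (r : Ren Γ Δ)
    (x : Obj α s) (ρ : Env α Δ) :
    envRen (Ren.lift r) (Env.cons x ρ) = Env.cons x (envRen r ρ) := by
  funext t v; cases v <;> rfl

theorem envRen_wk {α : Type} {Γ : List NType} {s : NType} (x : Obj α s) (ρ : Env α Γ) :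
    envRen Ren.wk (Env.cons x ρ) = ρ := by
  funext t v; rfl

theorem sat_rename {α : Type} :
    ∀ {Γ Δ : List NType} (r : Ren Γ Δ) (ρ : Env α Δ) (φ : Delta0 Γ),
      Delta0.sat ρ (φ.rename r) ↔ Delta0.sat (envRen r ρ) φ
  | _, _, r, ρ, .eqU a b => by
      simp only [Delta0.rename, Delta0.sat, eval_rename]
  | _, _, r, ρ, .neU a b => by
      simp only [Delta0.rename, Delta0.sat, eval_rename]
  | _, _, r, ρ, .tru => Iff.rfl
  | _, _, r, ρ, .fls => Iff.rfl
  | _, _, r, ρ, .and φ ψ => by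
      simp only [Delta0.rename, Delta0.sat, sat_rename r ρ φ, sat_rename r ρ ψ]
  | _, _, r, ρ, .or φ ψ => by
      simp only [Delta0.rename, Delta0.sat, sat_rename r ρ φ, sat_rename r ρ ψ]
  | _, _, r, ρ, .all s φ => by
      simp only [Delta0.rename, Delta0.sat, eval_rename]
      refine forall_congr' fun x => imp_congr_right fun _ => ?_
      rw [sat_rename (Ren.lift r) (Env.cons x ρ) φ, envRen_lift]
  | _, _, r, ρ, .ex s φ => by
      simp only [Delta0.rename, Delta0.sat, eval_rename]
      refine exists_congr fun x => and_congr_right fun _ => ?_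
      rw [sat_rename (Ren.lift r) (Env.cons x ρ) φ, envRen_lift]

theorem eval_subst {α : Type} {Γ Δ : List NType} (σ : Subst Γ Δ) (ρ : Env α Δ) :
    ∀ {t} (tm : Tm Γ t), Tm.eval ρ (tm.subst σ) = Tm.eval (envSub σ ρ) tm
  | _, .var v => rfl
  | _, .unit => rfl
  | _, .pair a b => by
      simp only [Tm.subst, Tm.eval, eval_subst σ ρ a, eval_subst σ ρ b]
      rfl
  | _, .fst p => by simp only [Tm.subst, Tm.eval, eval_subst σ ρ p]
  | _, .snd p => by simp only [Tm.subst, Tm.eval, eval_subst σ ρ p]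

theorem envSub_lift {α : Type} {Γ Δ : List NType} {s : NType} (σ : Subst Γ Δ)
    (x : Obj α s) (ρ : Env α Δ) :
    envSub (Subst.lift σ) (Env.cons x ρ) = Env.cons x (envSub σ ρ) := by
  funext t v
  cases v with
  | zero => rfl
  | succ w =>
      show Tm.eval (Env.cons x ρ) ((σ t w).rename Ren.wk) = Tm.eval ρ (σ t w)
      rw [eval_rename, envRen_wk]

theorem sat_subst {α : Type} :
    ∀ {Γ Δ : List NType} (σ : Subst Γ Δ) (ρ : Env α Δ) (φ : Delta0 Γ),
      Delta0.sat ρ (φ.subst σ) ↔ Delta0.sat (envSub σ ρ) φ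
  | _, _, σ, ρ, .eqU a b => by
      simp only [Delta0.subst, Delta0.sat, eval_subst]
  | _, _, σ, ρ, .neU a b => by
      simp only [Delta0.subst, Delta0.sat, eval_subst]
  | _, _, σ, ρ, .tru => Iff.rfl
  | _, _, σ, ρ, .fls => Iff.rfl
  | _, _, σ, ρ, .and φ ψ => by
      simp only [Delta0.subst, Delta0.sat, sat_subst σ ρ φ, sat_subst σ ρ ψ]
  | _, _, σ, ρ, .or φ ψ => by
      simp only [Delta0.subst, Delta0.sat, sat_subst σ ρ φ, sat_subst σ ρ ψ]
  | _, _, σ, ρ, .all s φ => by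
      simp only [Delta0.subst, Delta0.sat, eval_subst]
      refine forall_congr' fun x => imp_congr_right fun _ => ?_
      rw [sat_subst (Subst.lift σ) (Env.cons x ρ) φ, envSub_lift]
  | _, _, σ, ρ, .ex s φ => by
      simp only [Delta0.subst, Delta0.sat, eval_subst]
      refine exists_congr fun x => and_congr_right fun _ => ?_
      rw [sat_subst (Subst.lift σ) (Env.cons x ρ) φ, envSub_lift]

theorem memAtom_sat_subst {α : Type} {Γ Δ : List NType} (σ : Subst Γ Δ) (ρ : Env α Δ)
    (a : MemAtom Γ) : MemAtom.sat ρ (a.subst σ) ↔ MemAtom.sat (envSub σ ρ) a := by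
  obtain ⟨T, t, u⟩ := a
  simp only [MemAtom.sat, MemAtom.subst, eval_subst]
  rfl

theorem memCtx_sat_subst {α : Type} {Γ Δ : List NType} (σ : Subst Γ Δ) (ρ : Env α Δ)
    (Θ : MemCtx Γ) : MemCtx.sat ρ (MemCtx.subst σ Θ) ↔ MemCtx.sat (envSub σ ρ) Θ := by
  simp only [MemCtx.sat, MemCtx.subst, List.forall_mem_map]
  exact forall₂_congr fun a _ => memAtom_sat_subst σ ρ a

theorem ctxSat_subst {α : Type} {Γ Δ : List NType} (σ : Subst Γ Δ) (ρ : Env α Δ)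
    (G : List (Delta0 Γ)) :
    CtxSat ρ (G.map (Delta0.subst σ)) ↔ CtxSat (envSub σ ρ) G := by
  simp only [CtxSat, List.forall_mem_map]
  exact forall₂_congr fun φ _ => sat_subst σ ρ φ

theorem memAtom_sat_rename {α : Type} {Γ Δ : List NType} (r : Ren Γ Δ) (ρ : Env α Δ)
    (a : MemAtom Γ) : MemAtom.sat ρ (a.rename r) ↔ MemAtom.sat (envRen r ρ) a := by
  obtain ⟨T, t, u⟩ := a
  simp only [MemAtom.sat, MemAtom.rename, eval_rename]
  rfl

theorem memCtx_sat_rename {α : Type} {Γ Δ : List NType} (r : Ren Γ Δ) (ρ : Env α Δ)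
    (Θ : MemCtx Γ) : MemCtx.sat ρ (MemCtx.rename r Θ) ↔ MemCtx.sat (envRen r ρ) Θ := by
  simp only [MemCtx.sat, MemCtx.rename, List.forall_mem_map]
  exact forall₂_congr fun a _ => memAtom_sat_rename r ρ a

theorem ctxSat_rename {α : Type} {Γ Δ : List NType} (r : Ren Γ Δ) (ρ : Env α Δ)
    (G : List (Delta0 Γ)) :
    CtxSat ρ (G.map (Delta0.rename r)) ↔ CtxSat (envRen r ρ) G := by
  simp only [CtxSat, List.forall_mem_map]
  exact forall₂_congr fun φ _ => sat_rename r ρ φ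

theorem envSub_cons_id {α : Type} {Γ : List NType} {s : NType} (u : Tm Γ s)
    (ρ : Env α Γ) :
    envSub (Subst.cons u Subst.id) ρ = Env.cons (Tm.eval ρ u) ρ := by
  funext t v; cases v <;> rfl

theorem env_eta {α : Type} {Γ : List NType} {s : NType} (ρ : Env α (s :: Γ)) :
    ρ = Env.cons (ρ s .zero) (envRen Ren.wk ρ) := by
  funext t v; cases v <;> rfl

theorem unit_obj_eq {α : Type} (x y : Obj α .unit) : x = y := rfl

theorem memAtom_sat_def {α : Type} {Γ : List NType} {T : NType} (ρ : Env α Γ)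
    (t : Tm Γ T) (u : Tm Γ (.set T)) :
    MemAtom.sat ρ ⟨T, (t, u)⟩ = (Tm.eval ρ t ∈ (show Set (Obj α T) from Tm.eval ρ u)) :=
  rfl

def singObj {α : Type} {T : NType} (x : Obj α T) : Obj α (.set T) :=
  ({x} : Set (Obj α T))

/-- Soundness of the restricted intuitionistic sequent calculus: if
`Θ; Γ ⊢ ψ` is derivable then, for every assignment of the free variables to objects of
the appropriate nested relational types satisfying all membership atoms in Θ and all Δ₀
formulas in Γ, the conclusion ψ holds (⊆ as containment, = as equality, ∈ as membership). -/
theorem seq_soundness (Γ : List NType) (Θ : MemCtx Γ) (G : List (Delta0 Γ)) (ψ : RHS Γ)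
    (h : SeqD Γ Θ G ψ) :
    ∀ (α : Type) (ρ : Env α Γ), MemCtx.sat ρ Θ → CtxSat ρ G → RHS.sat ρ ψ := by
  induction h with
  | perm hΘ hG _ ih =>
      intro α ρ sΘ sG
      exact ih α ρ (fun a ha => sΘ a (hΘ.mem_iff.mp ha))
        (fun φ hφ => sG φ (hG.mem_iff.mp hφ))
  | contraction _ ih =>
      intro α ρ sΘ sG
      refine ih α ρ sΘ fun φ hφ => ?_
      rcases List.mem_cons.mp hφ with h | h
      · exact h ▸ sG _ (List.mem_cons_self)
      · exact sG _ h
  | memU_R =>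
      intro α ρ sΘ _
      exact sΘ _ (List.mem_cons_self)
  | eqSet_R _ _ ih1 ih2 =>
      intro α ρ sΘ sG
      exact Set.Subset.antisymm (ih1 α ρ sΘ sG) (ih2 α ρ sΘ sG)
  | eqProd_R _ _ ih1 ih2 =>
      intro α ρ sΘ sG
      exact Prod.ext (ih1 α ρ sΘ sG) (ih2 α ρ sΘ sG)
  | eqUnit_R =>
      intro α ρ _ _
      exact unit_obj_eq _ _
  | eqU_R _ ih =>
      intro α ρ sΘ sG
      rename_i Γ' Θ' G' t u _
      have := ih α (Env.cons (singObj (Tm.eval ρ t)) ρ) ?_ ?_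
      · have h1 : Tm.eval (Env.cons (singObj (Tm.eval ρ t)) ρ)
            (u.rename Ren.wk) = Tm.eval ρ u := by rw [eval_rename, envRen_wk]
        have h2 : RHS.sat (Env.cons (singObj (Tm.eval ρ t)) ρ)
            (RHS.mem (u.rename Ren.wk) (.var .zero)) := this
        simp only [RHS.sat, h1] at h2
        have : Tm.eval ρ u ∈ ({Tm.eval ρ t} : Set (Obj α .U)) := h2
        exact (Set.mem_singleton_iff.mp this).symm
      · intro a ha
        rcases List.mem_cons.mp ha with h | h
        · subst h
          rw [memAtom_sat_def, eval_rename, envRen_wk]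
          exact Set.mem_singleton _
        · rw [show a ∈ MemCtx.rename Ren.wk Θ' ↔ _ from Iff.rfl] at h
          have := (memCtx_sat_rename Ren.wk
            (Env.cons (singObj (Tm.eval ρ t)) ρ) Θ').mpr
          rw [envRen_wk] at this
          exact this sΘ a h
      · have := (ctxSat_rename Ren.wk
            (Env.cons (singObj (Tm.eval ρ t)) ρ) G').mpr
        rw [envRen_wk] at this
        exact this sG
  | sub_R _ ih =>
      intro α ρ sΘ sG
      rename_i Γ' Θ' G' T t u _
      intro x hx
      have := ih α (Env.cons x ρ) ?_ ?_
      · have h1 : Tm.eval (Env.cons x ρ) (u.rename Ren.wk) = Tm.eval ρ u := by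
          rw [eval_rename, envRen_wk]
        have h2 : RHS.sat (Env.cons x ρ)
            (RHS.mem (Tm.var .zero) (u.rename Ren.wk)) := this
        simp only [RHS.sat, h1] at h2
        exact h2
      · intro a ha
        rcases List.mem_cons.mp ha with h | h
        · subst h
          rw [memAtom_sat_def, eval_rename, envRen_wk]
          exact hx
        · have := (memCtx_sat_rename Ren.wk (Env.cons x ρ) Θ').mpr
          rw [envRen_wk] at this
          exact this sΘ a h
      · have := (ctxSat_rename Ren.wk (Env.cons x ρ) G').mpr
        rw [envRen_wk] at this
        exact this sG
  | memSet_R _ ih =>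
      intro α ρ sΘ sG
      rename_i Γ' Θ' G' T t u v _
      have heq : Tm.eval ρ t = Tm.eval ρ u := ih α ρ sΘ sG
      have hmem : Tm.eval ρ t ∈ (show Set (Obj α (.set T)) from Tm.eval ρ v) :=
        sΘ _ (List.mem_cons_self)
      show Tm.eval ρ u ∈ (show Set (Obj α (.set T)) from Tm.eval ρ v)
      exact heq ▸ hmem
  | bot_L =>
      intro α ρ _ sG
      exact absurd (sG _ (List.mem_cons_self)) not_false
  | and_L _ ih =>
      intro α ρ sΘ sG
      have hand : Delta0.sat ρ (.and _ _) := sG _ (List.mem_cons_self)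
      refine ih α ρ sΘ fun φ hφ => ?_
      rcases List.mem_cons.mp hφ with h | h
      · exact h ▸ hand.1
      · rcases List.mem_cons.mp h with h | h
        · exact h ▸ hand.2
        · exact sG _ (List.mem_cons_of_mem _ h)
  | or_L _ _ ih1 ih2 =>
      intro α ρ sΘ sG
      have hor : Delta0.sat ρ (.or _ _) := sG _ (List.mem_cons_self)
      rcases hor with h | h
      · refine ih1 α ρ sΘ fun φ hφ => ?_
        rcases List.mem_cons.mp hφ with h' | h'
        · exact h' ▸ h
        · exact sG _ (List.mem_cons_of_mem _ h')
      · refine ih2 α ρ sΘ fun φ hφ => ?_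
        rcases List.mem_cons.mp hφ with h' | h'
        · exact h' ▸ h
        · exact sG _ (List.mem_cons_of_mem _ h')
  | all_L _ ih =>
      intro α ρ sΘ sG
      rename_i Γ' Θ' G' T T' w z φ v vv _
      have hall : Delta0.sat ρ (.all z φ) := sG _ (List.mem_cons_self)
      have hw : MemAtom.sat ρ ⟨T, (w, z)⟩ := sΘ _ (List.mem_cons_self)
      refine ih α ρ sΘ fun φ' hφ' => ?_
      rcases List.mem_cons.mp hφ' with h | h
      · subst h
        rw [sat_subst, envSub_cons_id]
        exact hall _ hw
      · exact sG _ (List.mem_cons_of_mem _ h)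
  | ex_L _ ih =>
      intro α ρ sΘ sG
      rename_i Γ' Θ' G' T T' y φ v vv _
      have hex : Delta0.sat ρ (.ex y φ) := sG _ (List.mem_cons_self)
      obtain ⟨x, hx, hφx⟩ := hex
      have := ih α (Env.cons x ρ) ?_ ?_
      · have h1 : Tm.eval (Env.cons x ρ) (v.rename Ren.wk) = Tm.eval ρ v := by
          rw [eval_rename, envRen_wk]
        have h2 : Tm.eval (Env.cons x ρ) (vv.rename Ren.wk) = Tm.eval ρ vv := by
          rw [eval_rename, envRen_wk]
        have h3 : RHS.sat (Env.cons x ρ)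
            (RHS.mem (v.rename Ren.wk) (vv.rename Ren.wk)) := this
        simp only [RHS.sat, h1, h2] at h3
        exact h3
      · intro a ha
        rcases List.mem_cons.mp ha with h | h
        · subst h
          rw [memAtom_sat_def, eval_rename, envRen_wk]
          exact hx
        · have := (memCtx_sat_rename Ren.wk (Env.cons x ρ) Θ').mpr
          rw [envRen_wk] at this
          exact this sΘ a h
      · intro φ' hφ'
        rcases List.mem_cons.mp hφ' with h | h
        · exact h ▸ hφx
        · have := (ctxSat_rename Ren.wk (Env.cons x ρ) G').mpr
          rw [envRen_wk] at this
          exact this (fun φ'' hφ'' => sG _ (List.mem_cons_of_mem _ hφ'')) φ' h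
  | ne_L =>
      intro α ρ _ sG
      exact absurd rfl (sG _ (List.mem_cons_self))
  | eq_subst _ ih =>
      intro α ρ sΘ sG
      rename_i Γ' Θ' G' y T' v vv _
      have heq : Delta0.sat ρ (.eqU (.var .zero) (y.rename Ren.wk)) :=
        sG _ (List.mem_cons_self)
      have heq' : ρ .U .zero = Tm.eval (envRen Ren.wk ρ) y := by
        have := heq
        simpa only [Delta0.sat, Tm.eval, eval_rename] using this
      set ρ' := envRen Ren.wk ρ with hρ'
      have henv : envSub (Subst.cons y Subst.id) ρ' = ρ := by
        rw [envSub_cons_id, ← heq', ← env_eta]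
      have := ih α ρ' ?_ ?_
      · have h3 : RHS.sat ρ' (RHS.subst (Subst.cons y Subst.id) (.mem v vv)) := this
        simp only [RHS.subst, RHS.sat, eval_subst, henv] at h3
        exact h3
      · rw [memCtx_sat_subst, henv]; exact sΘ
      · rw [ctxSat_subst, henv]
        exact fun φ hφ => sG _ (List.mem_cons_of_mem _ hφ)
  | prod_beta1 _ ih =>
      intro α ρ sΘ sG
      rename_i Γ' a b Θ' G' t1 t2 T' v vv _
      have henv : envSub (Subst.cons (Tm.fst (.pair t1 t2)) Subst.id) (ρ := ρ) =
          envSub (Subst.cons t1 Subst.id) (ρ := ρ) := by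
        rw [envSub_cons_id, envSub_cons_id]; rfl
      have := ih α ρ ?_ ?_
      · have h3 : RHS.sat ρ (RHS.subst (Subst.cons t1 Subst.id) (.mem v vv)) := this
        show RHS.sat ρ (RHS.subst (Subst.cons (Tm.fst (.pair t1 t2)) Subst.id)
          (.mem v vv))
        simp only [RHS.subst, RHS.sat, eval_subst, henv] at h3 ⊢
        exact h3
      · rw [memCtx_sat_subst]
        rw [memCtx_sat_subst, henv] at sΘ
        exact sΘ
      · rw [ctxSat_subst]
        rw [ctxSat_subst, henv] at sG
        exact sG
  | prod_beta2 _ ih =>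
      intro α ρ sΘ sG
      rename_i Γ' a b Θ' G' t1 t2 T' v vv _
      have henv : envSub (Subst.cons (Tm.snd (.pair t1 t2)) Subst.id) (ρ := ρ) =
          envSub (Subst.cons t2 Subst.id) (ρ := ρ) := by
        rw [envSub_cons_id, envSub_cons_id]; rfl
      have := ih α ρ ?_ ?_
      · have h3 : RHS.sat ρ (RHS.subst (Subst.cons t2 Subst.id) (.mem v vv)) := this
        show RHS.sat ρ (RHS.subst (Subst.cons (Tm.snd (.pair t1 t2)) Subst.id)
          (.mem v vv))
        simp only [RHS.subst, RHS.sat, eval_subst, henv] at h3 ⊢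
        exact h3
      · rw [memCtx_sat_subst]
        rw [memCtx_sat_subst, henv] at sΘ
        exact sΘ
      · rw [ctxSat_subst]
        rw [ctxSat_subst, henv] at sG
        exact sG
  | prod_eta _ ih =>
      intro α ρ sΘ sG
      rename_i Γ' a b Θ' G' T' v vv _
      set p : Obj α a × Obj α b := ρ (.prod a b) .zero with hp
      set ρt : Env α Γ' := envRen Ren.wk ρ with hρt
      set ρ2 : Env α (a :: b :: Γ') := Env.cons p.1 (Env.cons p.2 ρt) with hρ2
      have henv : envSub etaSub ρ2 = ρ := by
        rw [env_eta (ρ := ρ)]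
        funext t v'
        cases v' with
        | zero => rfl
        | succ w => rfl
      have := ih α ρ2 ?_ ?_
      · have h3 : RHS.sat ρ2 (RHS.subst etaSub (.mem v vv)) := this
        simp only [RHS.subst, RHS.sat, eval_subst, henv] at h3
        exact h3
      · rw [memCtx_sat_subst, henv]; exact sΘ
      · rw [ctxSat_subst, henv]; exact sG
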